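/- Let F ⊆ E be finite fields with |F| = q and [E : F] = m, and let Tr : E → F denote the field trace. Let t be an integer with 2 ≤ t ≤ q^m − 1. Define C = {(Tr(f(a)))_{a ∈ E} : f ∈ E[x], deg f ≤ t−1} ⊆ F^E, a linear code of length q^m over F. Then |C| ≤ q^{m(t−1)+1}, and C is an orthogonal array of strength t: for every t pairwise distinct elements a_1,…,a_t ∈ E and every (v_1,…,v_t) ∈ F^t, the number of codewords c ∈ C with c_{a_s} = v_s for all s equals |C|/q^t. -/

import Mathlib

/-- The dual of the extended BCH code: the code
`{(Tr(f(a)))_{a ∈ E} : f ∈ E[x], deg f ≤ t−1} ⊆ F^E`, where `Tr : E → F` is the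
field trace of the extension `E/F`. -/
def traceCode (F : Type*) {E : Type*} [Field F] [Field E] [Algebra F E] (t : ℕ) :
    Set (E → F) :=
  {c | ∃ f : Polynomial E, f.natDegree ≤ t - 1 ∧ c = fun a => Algebra.trace F E (f.eval a)}

open Polynomial in
/-- The linear map sending a polynomial `f` to the function `a ↦ Tr(f(a))`. -/
noncomputable def traceEvalMap (F E : Type*) [Field F] [Field E] [Algebra F E] :
    Polynomial E →ₗ[F] (E → F) where
  toFun f := fun a => Algebra.trace F E (f.eval a)
  map_add' f g := by funext a; simp
  map_smul' c f := by funext a; simp [Polynomial.eval_smul]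

@[simp] lemma traceEvalMap_apply {F E : Type*} [Field F] [Field E] [Algebra F E]
    (f : Polynomial E) (a : E) : traceEvalMap F E f a = Algebra.trace F E (f.eval a) := rfl

lemma natDegree_le_iff_degree_lt' {E : Type*} [Field E] {f : Polynomial E} {t : ℕ}
    (ht : 1 ≤ t) : f.natDegree ≤ t - 1 ↔ f.degree < (t : ℕ) := by
  rcases eq_or_ne f 0 with rfl | hf
  · simp
  · rw [Polynomial.degree_eq_natDegree hf, Nat.cast_lt]
    omega

lemma traceCode_eq {F E : Type*} [Field F] [Field E] [Algebra F E] (t : ℕ) (ht : 1 ≤ t) :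
    traceCode F (E := E) t =
      (((Polynomial.degreeLT E t).restrictScalars F).map (traceEvalMap F E) :
        Set (E → F)) := by
  ext c
  simp only [traceCode, Set.mem_setOf_eq, SetLike.mem_coe, Submodule.mem_map,
    Submodule.restrictScalars_mem, Polynomial.mem_degreeLT]
  constructor
  · rintro ⟨f, hf, rfl⟩
    exact ⟨f, (natDegree_le_iff_degree_lt' ht).mp hf, rfl⟩
  · rintro ⟨f, hf, rfl⟩
    exact ⟨f, (natDegree_le_iff_degree_lt' ht).mpr hf, rfl⟩

theorem stmt7 {F E : Type*} [Field F] [Fintype F] [Field E] [Fintype E] [Algebra F E]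
    (q m t : ℕ) (hq : Fintype.card F = q) (hm : Module.finrank F E = m)
    (ht2 : 2 ≤ t) (ht : t ≤ q ^ m - 1) :
    Nat.card (traceCode F (E := E) t) ≤ q ^ (m * (t - 1) + 1) ∧
    ∀ (a : Fin t ↪ E) (v : Fin t → F),
      Nat.card {c : traceCode F (E := E) t // ∀ s, (c : E → F) (a s) = v s} * q ^ t
        = Nat.card (traceCode F (E := E) t) := by
  classical
  set W : Submodule F (Polynomial E) := (Polynomial.degreeLT E t).restrictScalars F with hWdef
  set L : Polynomial E →ₗ[F] (E → F) := traceEvalMap F E with hLdef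
  set Cs : Submodule F (E → F) := W.map L with hCsdef
  have hset : traceCode F (E := E) t = (Cs : Set (E → F)) := traceCode_eq t (by omega)
  have eW : ↥W ≃ (Fin t → E) := (Polynomial.degreeLTEquiv E t).toEquiv
  haveI : Finite ↥W := Finite.of_equiv _ eW.symm
  have hq0 : 0 < q := hq ▸ Fintype.card_pos
  have hm1 : 1 ≤ m := hm ▸ Module.finrank_pos
  have hcardE : Fintype.card E = q ^ m := by
    rw [Module.card_eq_pow_finrank (K := F) (V := E), hq, hm]
  have hcardW : Nat.card ↥W = q ^ (m * t) := by
    rw [Nat.card_congr eW, Nat.card_eq_fintype_card, Fintype.card_fun, hcardE,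
      Fintype.card_fin, ← pow_mul]
  set L' : ↥W →ₗ[F] (E → F) := L ∘ₗ W.subtype with hL'def
  have hrange : LinearMap.range L' = Cs := by
    rw [hL'def, LinearMap.range_comp, Submodule.range_subtype]
  have hquot : Nat.card (↥W ⧸ LinearMap.ker L') = Nat.card ↥Cs := by
    rw [Nat.card_congr (LinearMap.quotKerEquivRange L').toEquiv, hrange]
  have hiso : Nat.card ↥(LinearMap.ker L') * Nat.card ↥Cs = q ^ (m * t) := by
    rw [← hquot, ← Submodule.card_eq_card_quotient_mul_card, hcardW]
  -- the kernel of the trace map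
  set Tk : Submodule F E := LinearMap.ker (Algebra.trace F E) with hTkdef
  have hcardTk : Nat.card ↥Tk = q ^ (m - 1) := by
    have h1 := Submodule.card_eq_card_quotient_mul_card Tk
    have h2 : Nat.card (E ⧸ Tk) = q := by
      have h3 : LinearMap.range (Algebra.trace F E) = ⊤ :=
        LinearMap.range_eq_top.mpr (Algebra.trace_surjective F E)
      rw [hTkdef, Nat.card_congr (LinearMap.quotKerEquivRange (Algebra.trace F E)).toEquiv,
        h3, Nat.card_congr Submodule.topEquiv.toEquiv, Nat.card_eq_fintype_card, hq]
    rw [Nat.card_eq_fintype_card, hcardE, h2] at h1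
    have h4 : q ^ (m - 1) * q = Nat.card ↥Tk * q := by
      rw [← h1, ← pow_succ]
      congr 1
      omega
    exact (Nat.eq_of_mul_eq_mul_right hq0 h4).symm
  have hCmem : ∀ x : ↥Tk, Polynomial.C (x : E) ∈ W := by
    intro x
    rw [hWdef, Submodule.restrictScalars_mem, Polynomial.mem_degreeLT]
    refine lt_of_le_of_lt Polynomial.degree_C_le ?_
    exact_mod_cast (show (0 : ℕ) < t by omega)
  have hCker : ∀ x : ↥Tk, L' ⟨Polynomial.C (x : E), hCmem x⟩ = 0 := by
    intro x
    funext b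
    have hx : Algebra.trace F E (x : E) = 0 := x.2
    simp [hL'def, hLdef, hx]
  have hker_ge : q ^ (m - 1) ≤ Nat.card ↥(LinearMap.ker L') := by
    rw [← hcardTk]
    refine Nat.card_le_card_of_injective
      (fun x : ↥Tk => (⟨⟨Polynomial.C (x : E), hCmem x⟩, hCker x⟩ : ↥(LinearMap.ker L'))) ?_
    intro x y hxy
    have h' : (⟨Polynomial.C (x : E), hCmem x⟩ : ↥W) = ⟨Polynomial.C (y : E), hCmem y⟩ :=
      congrArg Subtype.val hxy
    have : Polynomial.C (x : E) = Polynomial.C (y : E) := congrArg Subtype.val h'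
    exact Subtype.ext (Polynomial.C_injective this)
  have h1 : Nat.card ↥Cs ≤ q ^ (m * (t - 1) + 1) := by
    have hmt : m * t = m * (t - 1) + m := by
      have : m * (t - 1 + 1) = m * (t - 1) + m := Nat.mul_succ m (t - 1)
      rw [show t - 1 + 1 = t by omega] at this
      omega
    have hmul : Nat.card ↥Cs * q ^ (m - 1) ≤ q ^ (m * (t - 1) + 1) * q ^ (m - 1) := by
      calc Nat.card ↥Cs * q ^ (m - 1)
          ≤ Nat.card ↥Cs * Nat.card ↥(LinearMap.ker L') :=
            Nat.mul_le_mul_left _ hker_ge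
        _ = q ^ (m * t) := by rw [mul_comm]; exact hiso
        _ = q ^ (m * (t - 1) + 1) * q ^ (m - 1) := by rw [← pow_add]; congr 1; omega
    exact Nat.le_of_mul_le_mul_right hmul (pow_pos hq0 (m - 1))
  rw [hset]
  refine ⟨h1, fun a v => ?_⟩
  set ψ : ↥Cs →ₗ[F] (Fin t → F) := (LinearMap.funLeft F F a) ∘ₗ Cs.subtype with hψdef
  have hψ : ∀ (c : ↥Cs) (s : Fin t), ψ c s = (c : E → F) (a s) := fun c s => rfl
  have hsurj : Function.Surjective ψ := by
    intro u
    choose w hw using fun s => Algebra.trace_surjective F E (u s)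
    set f := Lagrange.interpolate (Finset.univ : Finset (Fin t)) (⇑a) w with hfdef
    have hfd : f ∈ W := by
      rw [hWdef, Submodule.restrictScalars_mem, Polynomial.mem_degreeLT]
      have := Lagrange.degree_interpolate_lt (s := Finset.univ) w a.injective.injOn
      rw [hfdef]
      simpa using this
    refine ⟨⟨L f, Submodule.mem_map_of_mem hfd⟩, ?_⟩
    funext s
    rw [hψ]
    show Algebra.trace F E (f.eval (a s)) = u s
    rw [hfdef, Lagrange.eval_interpolate_at_node w a.injective.injOn (Finset.mem_univ s), hw]
  have hcardq : Nat.card ↥Cs = Nat.card ↥(LinearMap.ker ψ) * q ^ t := by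
    rw [Submodule.card_eq_card_quotient_mul_card (LinearMap.ker ψ)]
    congr 1
    rw [Nat.card_congr (LinearMap.quotKerEquivRange ψ).toEquiv,
      LinearMap.range_eq_top.mpr hsurj, Nat.card_congr Submodule.topEquiv.toEquiv,
      Nat.card_eq_fintype_card, Fintype.card_fun, hq, Fintype.card_fin]
  obtain ⟨c₀, hc₀⟩ := hsurj v
  have hψv : ∀ c : ↥Cs, (∀ s, (c : E → F) (a s) = v s) ↔ ψ c = v := by
    intro c
    constructor
    · intro h; funext s; rw [hψ]; exact h s
    · intro h s; rw [← hψ, h]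
  have e2 : {c : ↥Cs // ∀ s, (c : E → F) (a s) = v s} ≃ ↥(LinearMap.ker ψ) := by
    refine ⟨fun c => ⟨c.1 - c₀, ?_⟩, fun k => ⟨k.1 + c₀, ?_⟩, ?_, ?_⟩
    · rw [LinearMap.mem_ker, map_sub, (hψv c.1).mp c.2, hc₀, sub_self]
    · intro s
      have hk : ψ k.1 = 0 := k.2
      have : ψ (k.1 + c₀) = v := by rw [map_add, hk, hc₀, zero_add]
      exact (hψv _).mpr this s
    · intro c; apply Subtype.ext; simp
    · intro k; apply Subtype.ext; simp
  have hfin : Nat.card {c : ↥Cs // ∀ s, (c : E → F) (a s) = v s} * q ^ t = Nat.card ↥Cs := by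
    rw [Nat.card_congr e2]
    exact hcardq.symm
  exact hfin
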